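/- For every n ≥ 1, the assignment x_j ↦ π_j (for 1 ≤ j ≤ n) extends to a monoid isomorphism from the Hecke–Kiselman monoid HK(Q_n) of the linearly oriented type-A quiver Q_n onto the monoid NDPF_{n+1} of non-decreasing parking functions. -/

import Mathlib

set_option linter.unreachableTactic false
set_option linter.unusedTactic false

/-- The defining relations of the Hecke–Kiselman monoid of a quiver with
vertex type `V` and arrow relation `arr`. -/
inductive HKRel {V : Type} (arr : V → V → Prop) : FreeMonoid V → FreeMonoid V → Prop
  | idem (t : V) :
      HKRel arr (FreeMonoid.of t * FreeMonoid.of t) (FreeMonoid.of t)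
  | braid (s t : V) :
      HKRel arr (FreeMonoid.of s * FreeMonoid.of t * FreeMonoid.of s)
        (FreeMonoid.of t * FreeMonoid.of s * FreeMonoid.of t)
  | absorb (s t : V) : ¬ arr t s →
      HKRel arr (FreeMonoid.of t * FreeMonoid.of s * FreeMonoid.of t)
        (FreeMonoid.of s * FreeMonoid.of t)

/-- The congruence on the free monoid generated by the Hecke–Kiselman relations. -/
def HKCon {V : Type} (arr : V → V → Prop) : Con (FreeMonoid V) := conGen (HKRel arr)

/-- The Hecke–Kiselman monoid of the quiver `(V, arr)`. -/
abbrev HK {V : Type} (arr : V → V → Prop) : Type := (HKCon arr).Quotient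

/-- The generator of the Hecke–Kiselman monoid attached to the vertex `t`. -/
def HK.x {V : Type} (arr : V → V → Prop) (t : V) : HK arr :=
  (HKCon arr).mk' (FreeMonoid.of t)

/-- The quiver `(V, arr)` is acyclic: the transitive closure of `arr` is irreflexive. -/
def IsAcyclicQuiver {V : Type} (arr : V → V → Prop) : Prop :=
  ∀ v : V, ¬ Relation.TransGen arr v v

/-- The arrow relation of the linearly oriented type-`A` quiver `Q_n` with vertices
`1, …, n` (modelled as `Fin n`) and arrows `i → i+1`. -/
def arrQn (n : ℕ) : Fin n → Fin n → Prop := fun i j => (i : ℕ) + 1 = (j : ℕ)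

/-- The monoid of non-decreasing parking functions on `{1, …, n}` (modelled as `Fin n`):
order-preserving functions `f` with `f i ≤ i`, under composition. -/
def NDPF (n : ℕ) : Type :=
  {f : Fin n → Fin n // Monotone f ∧ ∀ i, f i ≤ i}

instance (n : ℕ) : Monoid (NDPF n) where
  mul f g := ⟨f.1 ∘ g.1, (f.2.1.comp g.2.1 : _), fun i => (f.2.2 _).trans (g.2.2 i)⟩
  one := ⟨id, monotone_id, fun _ => le_rfl⟩
  mul_assoc _ _ _ := rfl
  one_mul _ := rfl
  mul_one _ := rfl

/-- The generator `π_j` of `NDPF (n+1)`: it sends the point `j+1` to `j` and fixes all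
other points (here `j : Fin n` represents the paper's `j+1 ∈ {1,…,n}`, and `Fin (n+1)`
represents `{1,…,n+1}` via `i ↦ i+1`). -/
def ndpfPi {n : ℕ} (j : Fin n) : NDPF (n + 1) :=
  ⟨fun i => if (i : ℕ) = (j : ℕ) + 1 then ⟨(j : ℕ), by omega⟩ else i, by
    intro a b hab
    have hab' : (a : ℕ) ≤ (b : ℕ) := hab
    by_cases ha : (a : ℕ) = (j : ℕ) + 1 <;> by_cases hb : (b : ℕ) = (j : ℕ) + 1 <;>
      simp only [ha, hb, if_pos, if_neg, Fin.le_def] <;> simp <;> omega, by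
    intro i
    by_cases hi : (i : ℕ) = (j : ℕ) + 1 <;>
      simp only [hi, if_pos, if_neg, Fin.le_def] <;> simp <;> omega⟩

section HKside
variable {n : ℕ}

open FreeMonoid

theorem hk_rel {u v : FreeMonoid (Fin n)} (h : HKRel (arrQn n) u v) :
    (HKCon (arrQn n)).mk' u = (HKCon (arrQn n)).mk' v :=
  (Con.eq _).mpr (ConGen.Rel.of _ _ h)

theorem X_idem (t : Fin n) : HK.x (arrQn n) t * HK.x (arrQn n) t = HK.x (arrQn n) t := by
  have := hk_rel (HKRel.idem (arr := arrQn n) t)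
  rwa [map_mul] at this

theorem X_braid (s t : Fin n) :
    HK.x (arrQn n) s * HK.x (arrQn n) t * HK.x (arrQn n) s
      = HK.x (arrQn n) t * HK.x (arrQn n) s * HK.x (arrQn n) t := by
  have := hk_rel (HKRel.braid (arr := arrQn n) s t)
  rwa [map_mul, map_mul, map_mul, map_mul] at this

theorem X_absorb (s t : Fin n) (h : ¬ arrQn n t s) :
    HK.x (arrQn n) t * HK.x (arrQn n) s * HK.x (arrQn n) t
      = HK.x (arrQn n) s * HK.x (arrQn n) t := by
  have := hk_rel (HKRel.absorb (arr := arrQn n) s t h)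
  rwa [map_mul, map_mul, map_mul] at this

/-- The generator as a function of a natural number (`1` out of range). -/
def X' (n : ℕ) (k : ℕ) : HK (arrQn n) :=
  if h : k < n then HK.x (arrQn n) ⟨k, h⟩ else 1

theorem X'_coe (j : Fin n) : X' n (j : ℕ) = HK.x (arrQn n) j := by
  unfold X'
  rw [dif_pos j.isLt]

theorem R1 (a : ℕ) : X' n a * X' n a = X' n a := by
  unfold X'
  split
  · exact X_idem _
  · exact one_mul 1

theorem R2 (s t : ℕ) :
    X' n s * X' n t * X' n s = X' n t * X' n s * X' n t := by
  by_cases hs : s < n <;> by_cases ht : t < n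
  · unfold X'; rw [dif_pos hs, dif_pos ht]; exact X_braid _ _
  · have h1 : X' n t = 1 := dif_neg ht
    rw [h1, mul_one, one_mul, mul_one]
    exact R1 s
  · have h1 : X' n s = 1 := dif_neg hs
    rw [h1, mul_one, one_mul, mul_one]
    exact (R1 t).symm
  · have h1 : X' n s = 1 := dif_neg hs
    have h2 : X' n t = 1 := dif_neg ht
    rw [h1, h2]

theorem R3 (t s : ℕ) (h : s ≠ t + 1) :
    X' n t * X' n s * X' n t = X' n s * X' n t := by
  by_cases hs : s < n <;> by_cases ht : t < n
  · unfold X'; rw [dif_pos hs, dif_pos ht]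
    refine X_absorb _ _ ?_
    simp only [arrQn]
    exact fun hc => h hc.symm
  · have h1 : X' n t = 1 := dif_neg ht
    rw [h1]; simp
  · have h1 : X' n s = 1 := dif_neg hs
    rw [h1]; simpa using R1 t
  · have h1 : X' n s = 1 := dif_neg hs
    have h2 : X' n t = 1 := dif_neg ht
    rw [h1, h2]; simp

theorem Rcomm (k m : ℕ) (h1 : m ≠ k + 1) (h2 : k ≠ m + 1) :
    X' n k * X' n m = X' n m * X' n k :=
  calc X' n k * X' n m = X' n m * X' n k * X' n m := (R3 m k h2).symm
    _ = X' n k * X' n m * X' n k := R2 m k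
    _ = X' n m * X' n k := R3 k m h1

/- `z`-continuation versions (right-associated). -/
theorem R1z (a : ℕ) (z : HK (arrQn n)) : X' n a * (X' n a * z) = X' n a * z := by
  rw [← mul_assoc, R1]

theorem R2z (s t : ℕ) (z : HK (arrQn n)) :
    X' n s * (X' n t * (X' n s * z)) = X' n t * (X' n s * (X' n t * z)) := by
  simp only [← mul_assoc]; rw [R2]

theorem R3z (t s : ℕ) (h : s ≠ t + 1) (z : HK (arrQn n)) :
    X' n t * (X' n s * (X' n t * z)) = X' n s * (X' n t * z) := by
  simp only [← mul_assoc]; rw [R3 t s h]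

theorem Rcommz (k m : ℕ) (h1 : m ≠ k + 1) (h2 : k ≠ m + 1) (z : HK (arrQn n)) :
    X' n k * (X' n m * z) = X' n m * (X' n k * z) := by
  simp only [← mul_assoc]; rw [Rcomm k m h1 h2]

theorem xcxz (c : ℕ) (z : HK (arrQn n)) :
    X' n c * (X' n (c+1) * (X' n c * z)) = X' n c * (X' n (c+1) * z) := by
  rw [R2z, R3z (c+1) c (by omega)]

/-- The segment `x_v x_{v+1} ⋯ x_{b-1}`. -/
def sgx (n : ℕ) (v b : ℕ) : HK (arrQn n) :=
  ((List.range' v (b - v)).map (X' n)).prod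

theorem sgx_nil {v b : ℕ} (h : b ≤ v) : sgx n v b = 1 := by
  unfold sgx
  rw [Nat.sub_eq_zero_of_le h]
  simp

theorem sgx_cons {v b : ℕ} (h : v < b) : sgx n v b = X' n v * sgx n (v+1) b := by
  unfold sgx
  have hb : b - v = (b - (v+1)) + 1 := by omega
  rw [hb, List.range'_succ]
  simp

theorem sgx_snoc {v b : ℕ} (h : v ≤ b) : sgx n v (b+1) = sgx n v b * X' n b := by
  unfold sgx
  have hb : (b + 1) - v = (b - v) + 1 := by omega
  rw [hb, List.range'_concat]
  have hv : v + 1 * (b - v) = b := by omega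
  have hv' : v + (b - v) = b := by omega
  simp [hv, hv']

theorem sgx_single (a : ℕ) : sgx n a (a+1) = X' n a := by
  rw [sgx_cons (by omega), sgx_nil (le_refl (a+1)), mul_one]

/-- Left absorption: `x_a · (x_v ⋯ x_{b-1}) = x_v ⋯ x_{b-1}` when `v ≤ a < b`. -/
theorem SL1z : ∀ (k v a b : ℕ) (z : HK (arrQn n)), a - v ≤ k → v ≤ a → a < b →
    X' n a * (sgx n v b * z) = sgx n v b * z := by
  intro k
  induction k with
  | zero =>
    intro v a b z hk hva hab
    have hv : v = a := by omega
    subst hv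
    rw [sgx_cons hab, mul_assoc, R1z]
  | succ k ih =>
    intro v a b z hk hva hab
    rcases eq_or_lt_of_le hva with rfl | hlt
    · rw [sgx_cons hab, mul_assoc, R1z]
    · by_cases hc : a = v + 1
      · subst hc
        rw [sgx_cons (show v < b by omega), sgx_cons (show v + 1 < b by omega)]
        simp only [mul_assoc]
        rw [R3z (v+1) v (by omega)]
      · rw [sgx_cons (show v < b by omega)]
        simp only [mul_assoc]
        rw [Rcommz a v (by omega) (by omega), ih (v+1) a b z (by omega) (by omega) hab]

/-- Commutation of a single generator past a segment. -/
theorem SL2z : ∀ (k v a b : ℕ) (z : HK (arrQn n)),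
    b - v ≤ k → (∀ c, v ≤ c → c < b → c ≠ a + 1 ∧ a ≠ c + 1) →
    X' n a * (sgx n v b * z) = sgx n v b * (X' n a * z) := by
  intro k
  induction k with
  | zero =>
    intro v a b z hk hc
    rw [sgx_nil (by omega), one_mul, one_mul]
  | succ k ih =>
    intro v a b z hk hc
    by_cases hvb : v < b
    · rw [sgx_cons hvb]
      simp only [mul_assoc]
      have hcv := hc v (le_refl v) hvb
      rw [Rcommz a v hcv.1 hcv.2, ih (v+1) a b z (by omega)
        (fun c h1 h2 => hc c (by omega) h2)]
    · rw [sgx_nil (by omega), one_mul, one_mul]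

/-- Right absorption of a single generator: `(x_v ⋯ x_{b-1}) x_c = x_v ⋯ x_{b-1}`, `v ≤ c < b`. -/
theorem SL4z : ∀ (k v c b : ℕ) (z : HK (arrQn n)), b ≤ c + 1 + k → v ≤ c → c < b →
    sgx n v b * (X' n c * z) = sgx n v b * z := by
  intro k
  induction k with
  | zero =>
    intro v c b z hk hvc hcb
    have hb : b = c + 1 := by omega
    subst hb
    have h1 : sgx n v (c+1) = sgx n v c * X' n c := sgx_snoc hvc
    rw [h1]
    simp only [mul_assoc]
    rw [R1z]
  | succ k ih =>
    intro v c b z hk hvc hcb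
    rcases (show b = c + 1 ∨ b = c + 2 ∨ c + 3 ≤ b by omega) with hb | hb | hb
    · subst hb
      rw [sgx_snoc hvc]
      simp only [mul_assoc]
      rw [R1z]
    · subst hb
      have h1 : sgx n v (c+2) = sgx n v c * X' n c * X' n (c+1) := by
        rw [sgx_snoc (show v ≤ c + 1 by omega), sgx_snoc hvc]
      rw [h1]
      simp only [mul_assoc]
      rw [xcxz]
    · obtain ⟨b', rfl⟩ : ∃ b', b = b' + 1 := ⟨b - 1, by omega⟩
      rw [sgx_snoc (by omega : v ≤ b')]
      simp only [mul_assoc]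
      rw [Rcommz b' c (by omega) (by omega), ih v c b' (X' n b' * z) (by omega) hvc (by omega)]

/-- Right absorption of a whole segment. -/
theorem SL5z : ∀ (k v B w b : ℕ) (z : HK (arrQn n)), b - w ≤ k → v ≤ w → b ≤ B →
    sgx n v B * (sgx n w b * z) = sgx n v B * z := by
  intro k
  induction k with
  | zero =>
    intro v B w b z hk hvw hbB
    rw [show sgx n w b = 1 from sgx_nil (by omega), one_mul]
  | succ k ih =>
    intro v B w b z hk hvw hbB
    by_cases hwb : w < b
    · rw [show sgx n w b = X' n w * sgx n (w+1) b from sgx_cons hwb]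
      simp only [mul_assoc]
      rw [SL4z (B - w) v w B _ (by omega) hvw (by omega),
        ih v B (w+1) b z (by omega) (by omega) hbB]
    · rw [show sgx n w b = 1 from sgx_nil (by omega), one_mul]

end HKside
section NormalForm
variable {n : ℕ}

/-- Collapse of the interval `(v, b]` to `v`. -/
def Df (v b x : ℕ) : ℕ := if v < x ∧ x ≤ b then v else x

/-- The function realized by a list of collapse pairs (leftmost pair applied last). -/
def fF : List (ℕ × ℕ) → ℕ → ℕ
  | [], x => x
  | p :: t, x => Df p.1 p.2 (fF t x)

/-- Validity of canonical data. -/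
def Ok (n : ℕ) (l : List (ℕ × ℕ)) : Prop :=
  (∀ p ∈ l, p.1 < p.2 ∧ p.2 ≤ n) ∧ l.Pairwise (fun p q => q.1 < p.1 ∧ q.2 < p.2)

/-- The element of `HK` given by canonical data. -/
def WdH (n : ℕ) (l : List (ℕ × ℕ)) : HK (arrQn n) :=
  (l.map (fun p => sgx n p.1 p.2)).prod

theorem WdH_nil : WdH n [] = 1 := rfl

theorem WdH_cons (p : ℕ × ℕ) (t : List (ℕ × ℕ)) :
    WdH n (p :: t) = sgx n p.1 p.2 * WdH n t := by
  simp [WdH]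

theorem Ok_nil : Ok n [] := ⟨by simp, by simp⟩

theorem Ok_cons_iff {p : ℕ × ℕ} {t : List (ℕ × ℕ)} :
    Ok n (p :: t) ↔ (p.1 < p.2 ∧ p.2 ≤ n) ∧ (∀ q ∈ t, q.1 < p.1 ∧ q.2 < p.2) ∧ Ok n t := by
  constructor
  · rintro ⟨h1, h2⟩
    rw [List.pairwise_cons] at h2
    exact ⟨h1 p (by simp), h2.1, fun q hq => h1 q (by simp [hq]), h2.2⟩
  · rintro ⟨h1, h2, h3, h4⟩
    refine ⟨?_, List.pairwise_cons.mpr ⟨h2, h4⟩⟩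
    intro q hq
    rcases List.mem_cons.mp hq with rfl | hq
    · exact h1
    · exact h3 q hq

-- pointwise identities
theorem PW1 (a v b y : ℕ) (h : a + 2 ≤ v) :
    Df v b (Df a (a+1) y) = Df a (a+1) (Df v b y) := by
  simp only [Df]; split_ifs <;> omega

theorem PW2 (a b y : ℕ) (h : a + 1 ≤ b) :
    Df a (a+1) (Df (a+1) b y) = Df a b y := by
  simp only [Df]; split_ifs <;> omega

theorem PW2m (a c b y : ℕ) (h1 : a < c) (h2 : c < b) :
    Df a (a+1) (Df (a+1) b (Df a c y)) = Df a b y := by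
  simp only [Df]; split_ifs <;> omega

theorem PW3 (a v b y : ℕ) (h1 : v ≤ a) (h2 : a < b) :
    Df a (a+1) (Df v b y) = Df v b y := by
  simp only [Df]; split_ifs <;> omega

/-- Main rewriting lemma: multiplying a canonical form by a generator on the left
yields a canonical form. -/
theorem main_step (a : ℕ) (ha : a < n) :
    ∀ l : List (ℕ × ℕ), Ok n l → ∃ l', Ok n l' ∧
      X' n a * WdH n l = WdH n l' ∧
      (∀ x, fF l' x = Df a (a+1) (fF l x)) ∧
      (∀ V B, a < V → a + 1 < B → (∀ q ∈ l, q.1 < V ∧ q.2 < B) →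
        ∀ p ∈ l', p.1 < V ∧ p.2 < B) := by
  intro l
  induction l with
  | nil =>
    intro _
    refine ⟨[(a, a+1)], ?_, ?_, ?_, ?_⟩
    · exact Ok_cons_iff.mpr ⟨⟨by omega, by omega⟩, by simp, Ok_nil⟩
    · rw [WdH_cons, WdH_nil, sgx_single]
    · intro x; simp [fF]
    · intro V B hV hB _ p hp
      simp only [List.mem_singleton] at hp
      subst hp
      exact ⟨hV, hB⟩
  | cons hd t ih =>
    obtain ⟨v, b⟩ := hd
    intro hOk
    obtain ⟨⟨hvb, hbn⟩, hdom, hOkt⟩ := Ok_cons_iff.mp hOk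
    by_cases hc1 : a + 2 ≤ v
    · -- commute past this segment
      obtain ⟨t', hOk', hw, hf, hbd⟩ := ih hOkt
      refine ⟨(v, b) :: t', ?_, ?_, ?_, ?_⟩
      · exact Ok_cons_iff.mpr ⟨⟨hvb, hbn⟩,
          hbd v b (by omega) (by omega) hdom, hOk'⟩
      · rw [WdH_cons, WdH_cons]
        rw [SL2z (b - v) v a b (WdH n t) le_rfl
          (fun c h1 h2 => ⟨by omega, by omega⟩), hw]
      · intro x
        show Df v b (fF t' x) = Df a (a+1) (Df v b (fF t x))
        rw [hf x]
        exact PW1 a v b (fF t x) hc1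
      · intro V B hV hB hq p hp
        rcases List.mem_cons.mp hp with rfl | hp
        · exact hq (v, b) (by simp)
        · exact hbd V B hV hB (fun q hq' => hq q (by simp [hq'])) p hp
    · by_cases hc2 : v = a + 1
      · subst hc2
        -- replace (and possibly merge)
        match t with
        | [] =>
          refine ⟨[(a, b)], ?_, ?_, ?_, ?_⟩
          · exact Ok_cons_iff.mpr ⟨⟨by omega, hbn⟩, by simp, Ok_nil⟩
          · rw [WdH_cons, WdH_cons, WdH_nil, ← mul_assoc, ← sgx_cons (show a < b by omega)]
          · intro x
            show Df a b (fF [] x) = Df a (a+1) (Df (a+1) b (fF [] x))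
            rw [PW2 a b _ (by omega)]
          · intro V B hV hB hq p hp
            simp only [List.mem_singleton] at hp
            subst hp
            exact ⟨hV, (hq (a+1, b) (by simp)).2⟩
        | (w, c) :: t₂ =>
          obtain ⟨⟨hwc, hcn⟩, hdom₂, hOkt₂⟩ := Ok_cons_iff.mp hOkt
          have hwa : w < a + 1 := (hdom (w, c) (by simp)).1
          have hcb : c < b := (hdom (w, c) (by simp)).2
          by_cases hw : w = a
          · -- merge
            refine ⟨(a, b) :: t₂, ?_, ?_, ?_, ?_⟩
            · exact Ok_cons_iff.mpr ⟨⟨by omega, hbn⟩,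
                fun q hq => ⟨by have := (hdom₂ q hq).1; omega,
                  by have := (hdom₂ q hq).2; omega⟩, hOkt₂⟩
            · rw [WdH_cons, WdH_cons, WdH_cons, hw, ← mul_assoc,
                ← sgx_cons (show a < b by omega)]
              exact SL5z (c - a) a b a c (WdH n t₂) le_rfl le_rfl (by omega)
            · intro x
              show Df a b (fF t₂ x) = Df a (a+1) (Df (a+1) b (Df w c (fF t₂ x)))
              rw [hw, PW2m a c b _ (by omega) hcb]
            · intro V B hV hB hq p hp
              rcases List.mem_cons.mp hp with rfl | hp
              · exact ⟨hV, (hq (a+1, b) (by simp)).2⟩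
              · exact hq p (by simp [hp])
          · -- no merge
            refine ⟨(a, b) :: (w, c) :: t₂, ?_, ?_, ?_, ?_⟩
            · refine Ok_cons_iff.mpr ⟨⟨by omega, hbn⟩, ?_, hOkt⟩
              intro q hq
              rcases List.mem_cons.mp hq with rfl | hq
              · exact ⟨by omega, hcb⟩
              · exact ⟨by have := (hdom₂ q hq).1; omega,
                  by have := (hdom₂ q hq).2; omega⟩
            · rw [WdH_cons, WdH_cons, ← mul_assoc, ← sgx_cons (show a < b by omega),
                WdH_cons, WdH_cons]
            · intro x
              show Df a b (fF ((w,c)::t₂) x) = Df a (a+1) (Df (a+1) b (fF ((w,c)::t₂) x))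
              rw [PW2 a b _ (by omega)]
            · intro V B hV hB hq p hp
              rcases List.mem_cons.mp hp with rfl | hp
              · exact ⟨hV, (hq (a+1, b) (by simp)).2⟩
              · exact hq p (by simp [hp])
      · have hva : v ≤ a := by omega
        by_cases hab : a < b
        · -- absorb
          refine ⟨(v, b) :: t, hOk, ?_, ?_, ?_⟩
          · rw [WdH_cons]
            exact SL1z (a - v) v a b (WdH n t) le_rfl hva hab
          · intro x
            show Df v b (fF t x) = Df a (a+1) (Df v b (fF t x))
            rw [PW3 a v b _ hva hab]
          · intro V B hV hB hq p hp
            exact hq p hp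
        · -- insert new singleton pair in front
          have hba : b ≤ a := by omega
          refine ⟨(a, a+1) :: (v, b) :: t, ?_, ?_, ?_, ?_⟩
          · refine Ok_cons_iff.mpr ⟨⟨by omega, by omega⟩, ?_, hOk⟩
            intro q hq
            rcases List.mem_cons.mp hq with rfl | hq
            · exact ⟨by omega, by omega⟩
            · exact ⟨by have := (hdom q hq).1; omega,
                by have := (hdom q hq).2; omega⟩
          · rw [WdH_cons (a, a+1), sgx_single]
          · intro x
            rfl
          · intro V B hV hB hq p hp
            rcases List.mem_cons.mp hp with rfl | hp
            · exact ⟨hV, hB⟩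
            · exact hq p hp

end NormalForm
section Uniqueness
variable {n : ℕ}

theorem Df_le (v b x : ℕ) : Df v b x ≤ x := by
  simp only [Df]; split_ifs <;> omega

theorem Df_mono (v b : ℕ) {x y : ℕ} (h : x ≤ y) : Df v b x ≤ Df v b y := by
  simp only [Df]; split_ifs <;> omega

theorem fF_le : ∀ (l : List (ℕ × ℕ)) (x : ℕ), fF l x ≤ x := by
  intro l
  induction l with
  | nil => intro x; exact le_rfl
  | cons p t ih => intro x; exact (Df_le _ _ _).trans (ih x)

theorem fF_mono : ∀ (l : List (ℕ × ℕ)) {x y : ℕ}, x ≤ y → fF l x ≤ fF l y := by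
  intro l
  induction l with
  | nil => intro x y h; exact h
  | cons p t ih => intro x y h; exact Df_mono _ _ (ih h)

theorem fF_fix : ∀ (l : List (ℕ × ℕ)) (x : ℕ), (∀ p ∈ l, p.2 < x) → fF l x = x := by
  intro l
  induction l with
  | nil => intro x _; rfl
  | cons p t ih =>
    intro x h
    show Df p.1 p.2 (fF t x) = x
    rw [ih x (fun q hq => h q (by simp [hq]))]
    have := h p (by simp)
    simp only [Df]
    split_ifs <;> omega

theorem mem_char : ∀ (l : List (ℕ × ℕ)), Ok n l → ∀ v b : ℕ,
    ((v, b) ∈ l ↔ (v < b ∧ fF l b = v ∧ fF l (b+1) ≠ v)) := by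
  intro l
  induction l with
  | nil =>
    intro _ v b
    simp only [List.not_mem_nil, false_iff, fF]
    omega
  | cons hd t ih =>
    obtain ⟨v₀, b₀⟩ := hd
    intro hOk v b
    obtain ⟨⟨hvb₀, hbn₀⟩, hdom, hOkt⟩ := Ok_cons_iff.mp hOk
    have ht0 : fF t b₀ = b₀ := fF_fix t b₀ (fun q hq => (hdom q hq).2)
    have ht1 : fF t (b₀+1) = b₀ + 1 := fF_fix t (b₀+1) (fun q hq => by
      have := (hdom q hq).2; omega)
    constructor
    · intro hmem
      rcases List.mem_cons.mp hmem with heq | hmem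
      · obtain ⟨rfl, rfl⟩ := Prod.mk.injEq .. ▸ heq
        refine ⟨hvb₀, ?_, ?_⟩
        · show Df v b (fF t b) = v
          rw [ht0]
          simp only [Df]; split_ifs <;> omega
        · show Df v b (fF t (b+1)) ≠ v
          rw [ht1]
          simp only [Df]; split_ifs <;> omega
      · obtain ⟨h1, h2, h3⟩ := (ih hOkt v b).mp hmem
        have hvv : v < v₀ := (hdom (v, b) hmem).1
        have hbb : b < b₀ := (hdom (v, b) hmem).2
        refine ⟨h1, ?_, ?_⟩
        · show Df v₀ b₀ (fF t b) = v
          rw [h2]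
          simp only [Df]; split_ifs <;> omega
        · show Df v₀ b₀ (fF t (b+1)) ≠ v
          intro hcon
          apply h3
          by_cases hin : v₀ < fF t (b+1) ∧ fF t (b+1) ≤ b₀
          · exfalso
            rw [show Df v₀ b₀ (fF t (b+1)) = v₀ by simp only [Df]; rw [if_pos hin]] at hcon
            omega
          · rwa [show Df v₀ b₀ (fF t (b+1)) = fF t (b+1) by
              simp only [Df]; rw [if_neg hin]] at hcon
    · rintro ⟨h1, h2, h3⟩
      have hzb : fF t b ≤ b := fF_le t b
      have hzb1 : fF t (b+1) ≤ b + 1 := fF_le t (b+1)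
      have hmono : fF t b ≤ fF t (b+1) := fF_mono t (by omega)
      by_cases hb : b = b₀
      · subst hb
        have : fF ((v₀, b) :: t) b = v₀ := by
          show Df v₀ b (fF t b) = v₀
          rw [ht0]
          simp only [Df]; split_ifs <;> omega
        have hv : v = v₀ := by rw [h2] at this; omega
        rw [hv]
        exact List.mem_cons_self
      · by_cases hbig : b₀ < b
        · exfalso
          have : fF ((v₀, b₀) :: t) b = b := by
            apply fF_fix
            intro q hq
            rcases List.mem_cons.mp hq with rfl | hq
            · omega
            · have := (hdom q hq).2; omega
          omega
        · -- b < b₀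
          have hbb : b < b₀ := by omega
          -- let z = fF t b, z' = fF t (b+1)
          have hz : ¬ (v₀ < fF t b ∧ fF t b ≤ b₀) := by
            intro hin
            have hfb : fF ((v₀, b₀) :: t) b = v₀ := by
              show Df v₀ b₀ (fF t b) = v₀
              simp only [Df]; rw [if_pos hin]
            have hv : v = v₀ := by rw [h2] at hfb; omega
            have hin' : v₀ < fF t (b+1) ∧ fF t (b+1) ≤ b₀ := by omega
            have : fF ((v₀, b₀) :: t) (b+1) = v₀ := by
              show Df v₀ b₀ (fF t (b+1)) = v₀
              simp only [Df]; rw [if_pos hin']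
            omega
          have hzv : fF t b = v := by
            have : fF ((v₀, b₀) :: t) b = fF t b := by
              show Df v₀ b₀ (fF t b) = fF t b
              simp only [Df]; rw [if_neg hz]
            omega
          have hzv' : fF t (b+1) ≠ v := by
            intro hcon
            apply h3
            show Df v₀ b₀ (fF t (b+1)) = v
            rw [hcon]
            simp only [Df]; split_ifs <;> omega
          exact List.mem_cons_of_mem _ ((ih hOkt v b).mpr ⟨h1, hzv, hzv'⟩)

theorem ok_unique : ∀ (l l' : List (ℕ × ℕ)), Ok n l → Ok n l' →
    (∀ x, fF l x = fF l' x) → l = l' := by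
  intro l l' h h' hf
  have hmem : ∀ p : ℕ × ℕ, p ∈ l ↔ p ∈ l' := by
    intro p
    have := mem_char l h p.1 p.2
    have h2 := mem_char l' h' p.1 p.2
    rw [← Prod.mk.eta (p := p)] at *
    rw [this, h2, hf, hf]
  have nd : l.Nodup := h.2.imp (fun {a b} hab => by
    intro hcon; rw [hcon] at hab; omega)
  have nd' : l'.Nodup := h'.2.imp (fun {a b} hab => by
    intro hcon; rw [hcon] at hab; omega)
  have hperm : l.Perm l' := by
    apply List.perm_of_nodup_nodup_toFinset_eq nd nd'
    apply Finset.ext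
    intro p
    simp only [List.mem_toFinset]
    exact hmem p
  haveI : IsAntisymm (ℕ × ℕ) (fun p q => q.2 < p.2) :=
    ⟨fun a b h1 h2 => absurd h2 (by omega)⟩
  have s1 : List.Pairwise (fun p q : ℕ × ℕ => q.2 < p.2) l :=
    h.2.imp (fun {a b} hab => hab.2)
  have s2 : List.Pairwise (fun p q : ℕ × ℕ => q.2 < p.2) l' :=
    h'.2.imp (fun {a b} hab => hab.2)
  exact List.Perm.eq_of_pairwise (fun a b _ _ h1 h2 => absurd h2 (by omega)) s1 s2 hperm

end Uniqueness
section Hom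
variable {n : ℕ}

theorem ndpf_mul_apply (f g : NDPF (n+1)) (i : Fin (n+1)) : (f * g).1 i = f.1 (g.1 i) := rfl

theorem ndpf_ext {f g : NDPF (n+1)} (h : ∀ i, ((f.1 i : ℕ)) = ((g.1 i : ℕ))) : f = g :=
  Subtype.ext (funext fun i => Fin.ext (h i))

theorem ndpfPi_apply (j : Fin n) (i : Fin (n+1)) :
    ((ndpfPi j).1 i : ℕ) = if (i : ℕ) = (j : ℕ) + 1 then (j : ℕ) else (i : ℕ) := by
  simp only [ndpfPi]
  split_ifs <;> rfl

theorem pi_idem (t : Fin n) : ndpfPi t * ndpfPi t = ndpfPi t := by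
  apply ndpf_ext; intro i
  simp only [ndpf_mul_apply, ndpfPi_apply]
  split_ifs <;> omega

theorem pi_braid (s t : Fin n) :
    ndpfPi s * ndpfPi t * ndpfPi s = ndpfPi t * ndpfPi s * ndpfPi t := by
  apply ndpf_ext; intro i
  simp only [ndpf_mul_apply, ndpfPi_apply]
  split_ifs <;> omega

theorem pi_absorb (s t : Fin n) (h : ¬ arrQn n t s) :
    ndpfPi t * ndpfPi s * ndpfPi t = ndpfPi s * ndpfPi t := by
  simp only [arrQn] at h
  apply ndpf_ext; intro i
  simp only [ndpf_mul_apply, ndpfPi_apply]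
  split_ifs <;> omega

/-- The homomorphism from the free monoid. -/
def phi0 (n : ℕ) : FreeMonoid (Fin n) →* NDPF (n+1) := FreeMonoid.lift ndpfPi

theorem hk_le_ker : HKCon (arrQn n) ≤ Con.ker (phi0 n) := by
  apply Con.conGen_le.mpr
  intro x y h
  rw [Con.ker_rel]
  cases h with
  | idem t => simp only [map_mul, phi0, FreeMonoid.lift_eval_of]; exact pi_idem t
  | braid s t => simp only [map_mul, phi0, FreeMonoid.lift_eval_of]; exact pi_braid s t
  | absorb s t h => simp only [map_mul, phi0, FreeMonoid.lift_eval_of]; exact pi_absorb s t h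

/-- The induced homomorphism from the Hecke–Kiselman monoid. -/
def phiHK (n : ℕ) : HK (arrQn n) →* NDPF (n+1) := Con.lift _ (phi0 n) hk_le_ker

theorem phiHK_coe (u : FreeMonoid (Fin n)) : phiHK n ((HKCon (arrQn n)).mk' u) = phi0 n u :=
  Con.lift_coe _ u

theorem reduce (u : FreeMonoid (Fin n)) : ∃ l, Ok n l ∧
    (HKCon (arrQn n)).mk' u = WdH n l ∧
    ∀ i : Fin (n+1), (((phi0 n) u).1 i : ℕ) = fF l (i : ℕ) := by
  induction u using FreeMonoid.recOn with
  | one =>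
    refine ⟨[], Ok_nil, by rw [map_one, WdH_nil], ?_⟩
    intro i
    rw [map_one]
    rfl
  | of_mul x xs ihx =>
    obtain ⟨l, hOk, hw, hf⟩ := ihx
    obtain ⟨l', hOk', hw', hf', _⟩ := main_step (n := n) (x : ℕ) x.isLt l hOk
    refine ⟨l', hOk', ?_, ?_⟩
    · rw [map_mul, hw]
      have hx : (HKCon (arrQn n)).mk' (FreeMonoid.of x) = X' n (x : ℕ) := (X'_coe x).symm
      rw [hx, hw']
    · intro i
      have hpo : phi0 n (FreeMonoid.of x) = ndpfPi x := FreeMonoid.lift_eval_of _ _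
      rw [map_mul, ndpf_mul_apply, hpo, ndpfPi_apply, hf i, hf' (i : ℕ)]
      simp only [Df]
      split_ifs <;> omega

theorem phi_inj : Function.Injective (phiHK n) := by
  intro p q h
  revert h
  refine Con.induction_on₂ p q ?_
  intro u w h
  have h' : phi0 n u = phi0 n w := by
    rw [show ((u : HK (arrQn n)) = (HKCon (arrQn n)).mk' u) from rfl,
      show ((w : HK (arrQn n)) = (HKCon (arrQn n)).mk' w) from rfl] at h
    rwa [phiHK_coe, phiHK_coe] at h
  obtain ⟨l, hOk, hw, hf⟩ := reduce u
  obtain ⟨l2, hOk2, hw2, hf2⟩ := reduce w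
  have hll : l = l2 := by
    apply ok_unique l l2 hOk hOk2
    intro x
    by_cases hx : x ≤ n
    · have h1 := hf ⟨x, by omega⟩
      have h2 := hf2 ⟨x, by omega⟩
      rw [h'] at h1
      simp only at h1 h2
      omega
    · rw [fF_fix l x (fun p hp => by have := (hOk.1 p hp).2; omega),
        fF_fix l2 x (fun p hp => by have := (hOk2.1 p hp).2; omega)]
  show (HKCon (arrQn n)).mk' u = (HKCon (arrQn n)).mk' w
  rw [hw, hll, hw2]

end Hom
section Surj
variable {n : ℕ}

/-- The distance-to-identity measure. -/
def msr (f : NDPF (n+1)) : ℕ := ∑ i : Fin (n+1), ((i : ℕ) - (f.1 i : ℕ))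

theorem ndpf_gen : ∀ (m : ℕ) (f : NDPF (n+1)), msr f ≤ m →
    ∃ u : FreeMonoid (Fin n), phi0 n u = f := by
  intro m
  induction m with
  | zero =>
    intro f hm
    have hz : ∀ i : Fin (n+1), ((i:ℕ) - (f.1 i : ℕ)) = 0 := by
      intro i
      have := Finset.sum_eq_zero_iff.mp (Nat.le_zero.mp hm)
      exact this i (Finset.mem_univ i)
    refine ⟨1, ?_⟩
    rw [map_one]
    apply ndpf_ext
    intro i
    have h1 : (f.1 i : ℕ) ≤ (i : ℕ) := f.2.2 i
    have h2 := hz i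
    have h3 : ((1 : NDPF (n+1)).1 i : ℕ) = (i : ℕ) := rfl
    omega
  | succ m ih =>
    intro f hm
    by_cases hid : ∀ i, (f.1 i : ℕ) = (i : ℕ)
    · refine ⟨1, ?_⟩
      rw [map_one]
      apply ndpf_ext
      intro i
      have h3 : ((1 : NDPF (n+1)).1 i : ℕ) = (i : ℕ) := rfl
      rw [hid i, h3]
    · push_neg at hid
      obtain ⟨i₀, hi₀⟩ := hid
      set s : Finset (Fin (n+1)) := Finset.univ.filter (fun i => f.1 i ≠ i) with hs_def
      have hsne : s.Nonempty := by
        refine ⟨i₀, ?_⟩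
        simp only [hs_def, Finset.mem_filter, Finset.mem_univ, true_and]
        exact fun hc => hi₀ (congrArg Fin.val hc)
      set k := s.min' hsne with hk_def
      have hk_mem : f.1 k ≠ k := by
        have := s.min'_mem hsne
        simpa [hs_def] using this
      have hk1 : 1 ≤ (k : ℕ) := by
        by_contra h0
        apply hk_mem
        have h1 : (f.1 k : ℕ) ≤ (k : ℕ) := f.2.2 k
        apply Fin.ext
        omega
      have hkpred_lt : ((k:ℕ) - 1) < n + 1 := by omega
      have hkpred : (f.1 ⟨(k:ℕ)-1, hkpred_lt⟩ : ℕ) = (k:ℕ) - 1 := by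
        by_contra hne
        have hmem : (⟨(k:ℕ)-1, hkpred_lt⟩ : Fin (n+1)) ∈ s := by
          simp only [hs_def, Finset.mem_filter, Finset.mem_univ, true_and]
          exact fun hc => hne (by rw [hc])
        have hle := s.min'_le _ hmem
        have hle' : (k:ℕ) ≤ (k:ℕ)-1 := hle
        omega
      have hfk : (f.1 k : ℕ) = (k:ℕ) - 1 := by
        have hmono : (f.1 ⟨(k:ℕ)-1, hkpred_lt⟩ : ℕ) ≤ (f.1 k : ℕ) :=
          f.2.1 (show (⟨(k:ℕ)-1, hkpred_lt⟩ : Fin (n+1)) ≤ k from by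
            rw [Fin.le_def]; show (k:ℕ)-1 ≤ (k:ℕ); omega)
        have hle : (f.1 k : ℕ) ≤ (k:ℕ) := f.2.2 k
        have hne : (f.1 k : ℕ) ≠ (k:ℕ) := fun hc => hk_mem (Fin.ext hc)
        omega
      set s2 : Finset (Fin (n+1)) := Finset.univ.filter (fun i => f.1 i = f.1 k) with hs2_def
      have hs2ne : s2.Nonempty := ⟨k, by simp [hs2_def]⟩
      set r := s2.max' hs2ne with hr_def
      have hrval : f.1 r = f.1 k := by
        have := s2.max'_mem hs2ne
        simpa [hs2_def] using this
      have hrval' : (f.1 r : ℕ) = (k:ℕ) - 1 := by rw [hrval]; exact hfk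
      have hkr : (k:ℕ) ≤ (r:ℕ) := s2.le_max' k (by simp [hs2_def])
      have hr1 : 1 ≤ (r:ℕ) := by omega
      have hrpred_lt : ((r:ℕ) - 1) < n + 1 := by omega
      have hrpred : (f.1 ⟨(r:ℕ)-1, hrpred_lt⟩ : ℕ) = (k:ℕ) - 1 := by
        by_cases hrk : (r:ℕ) = (k:ℕ)
        · have heq : (⟨(r:ℕ)-1, hrpred_lt⟩ : Fin (n+1)) = ⟨(k:ℕ)-1, hkpred_lt⟩ := by
            apply Fin.ext
            show (r:ℕ)-1 = (k:ℕ)-1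
            omega
          rw [heq, hkpred]
        · have h1 : (f.1 k : ℕ) ≤ (f.1 ⟨(r:ℕ)-1, hrpred_lt⟩ : ℕ) :=
            f.2.1 (by rw [Fin.le_def]; show (k:ℕ) ≤ (r:ℕ)-1; omega)
          have h2 : (f.1 ⟨(r:ℕ)-1, hrpred_lt⟩ : ℕ) ≤ (f.1 r : ℕ) :=
            f.2.1 (by rw [Fin.le_def]; show (r:ℕ)-1 ≤ (r:ℕ); omega)
          omega
      have hrnext : ∀ (h : (r:ℕ) + 1 ≤ n), (k:ℕ) - 1 < (f.1 ⟨(r:ℕ)+1, by omega⟩ : ℕ) := by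
        intro h
        have hne : (f.1 ⟨(r:ℕ)+1, by omega⟩ : ℕ) ≠ (k:ℕ) - 1 := by
          intro hc
          have hmem : (⟨(r:ℕ)+1, by omega⟩ : Fin (n+1)) ∈ s2 := by
            simp only [hs2_def, Finset.mem_filter, Finset.mem_univ, true_and]
            apply Fin.ext
            rw [hc, hfk]
          have hle := s2.le_max' _ hmem
          have hle' : (r:ℕ)+1 ≤ (r:ℕ) := hle
          omega
        have hmono : (f.1 r : ℕ) ≤ (f.1 ⟨(r:ℕ)+1, by omega⟩ : ℕ) :=
          f.2.1 (by rw [Fin.le_def]; show (r:ℕ) ≤ (r:ℕ)+1; omega)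
        omega
      set grv : ℕ :=
        min (r:ℕ) (if h : (r:ℕ)+1 ≤ n then (f.1 ⟨(r:ℕ)+1, by omega⟩ : ℕ) else (r:ℕ))
        with hgrv
      have hgr_le : grv ≤ (r:ℕ) := min_le_left _ _
      have hgr_lt : grv < n + 1 := lt_of_le_of_lt hgr_le r.isLt
      have hgr_gt : (k:ℕ) - 1 < grv := by
        rw [hgrv]
        by_cases h : (r:ℕ)+1 ≤ n
        · rw [dif_pos h]
          have := hrnext h
          omega
        · rw [dif_neg h]
          omega
      have hgr_le_next : ∀ (j : Fin (n+1)), (r:ℕ) < (j:ℕ) → grv ≤ (f.1 j : ℕ) := by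
        intro j hj
        have hrn : (r:ℕ)+1 ≤ n := by have := j.isLt; omega
        rw [hgrv, dif_pos hrn]
        have hmono : (f.1 ⟨(r:ℕ)+1, by omega⟩ : ℕ) ≤ (f.1 j : ℕ) :=
          f.2.1 (by rw [Fin.le_def]; show (r:ℕ)+1 ≤ (j:ℕ); omega)
        omega
      have hmono_g : Monotone (fun i : Fin (n+1) =>
          if i = r then (⟨grv, hgr_lt⟩ : Fin (n+1)) else f.1 i) := by
        intro i j hij
        have hij' : (i:ℕ) ≤ (j:ℕ) := hij
        show (if i = r then (⟨grv, hgr_lt⟩ : Fin (n+1)) else f.1 i)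
          ≤ (if j = r then (⟨grv, hgr_lt⟩ : Fin (n+1)) else f.1 j)
        by_cases hi : i = r
        · by_cases hj : j = r
          · rw [hi, hj]
          · rw [if_pos hi, if_neg hj]
            have hne : (j:ℕ) ≠ (r:ℕ) := fun hc => hj (Fin.ext hc)
            have hi' : (i:ℕ) = (r:ℕ) := congrArg Fin.val hi
            have hrj : (r:ℕ) < (j:ℕ) := by omega
            rw [Fin.le_def]
            show grv ≤ (f.1 j : ℕ)
            exact hgr_le_next j hrj
        · by_cases hj : j = r
          · rw [if_neg hi, if_pos hj]
            have hne : (i:ℕ) ≠ (r:ℕ) := fun hc => hi (Fin.ext hc)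
            have hj' : (j:ℕ) = (r:ℕ) := congrArg Fin.val hj
            have h1 : (f.1 i : ℕ) ≤ (f.1 ⟨(r:ℕ)-1, hrpred_lt⟩ : ℕ) :=
              f.2.1 (by rw [Fin.le_def]; show (i:ℕ) ≤ (r:ℕ)-1; omega)
            rw [Fin.le_def]
            show (f.1 i : ℕ) ≤ grv
            omega
          · rw [if_neg hi, if_neg hj]
            exact f.2.1 hij
      have hle_g : ∀ i : Fin (n+1),
          (if i = r then (⟨grv, hgr_lt⟩ : Fin (n+1)) else f.1 i) ≤ i := by
        intro i
        by_cases hi : i = r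
        · rw [if_pos hi, Fin.le_def]
          show grv ≤ (i:ℕ)
          have hi' : (i:ℕ) = (r:ℕ) := congrArg Fin.val hi
          omega
        · rw [if_neg hi]
          exact f.2.2 i
      set g : NDPF (n+1) := ⟨fun i =>
        if i = r then (⟨grv, hgr_lt⟩ : Fin (n+1)) else f.1 i, hmono_g, hle_g⟩ with hg_def
      have hgval : ∀ i, (g.1 i : ℕ) = if i = r then grv else (f.1 i : ℕ) := by
        intro i
        by_cases hi : i = r
        · rw [if_pos hi]
          show Fin.val (if i = r then (⟨grv, hgr_lt⟩ : Fin (n+1)) else f.1 i) = grv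
          rw [if_pos hi]
        · rw [if_neg hi]
          show Fin.val (if i = r then (⟨grv, hgr_lt⟩ : Fin (n+1)) else f.1 i) = Fin.val (f.1 i)
          rw [if_neg hi]
      have hrm1 : (r:ℕ) - 1 < n := by
        have := r.isLt
        omega
      have hdecomp : g * ndpfPi ⟨(r:ℕ)-1, hrm1⟩ = f := by
        apply ndpf_ext
        intro i
        rw [ndpf_mul_apply]
        have hπ : ((ndpfPi ⟨(r:ℕ)-1, hrm1⟩).1 i : ℕ) =
            if (i:ℕ) = (r:ℕ) then (r:ℕ)-1 else (i:ℕ) := by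
          rw [ndpfPi_apply]
          have hcoe : ((⟨(r:ℕ)-1, hrm1⟩ : Fin n) : ℕ) = (r:ℕ)-1 := rfl
          rw [hcoe]
          split_ifs <;> omega
        by_cases hc : (i:ℕ) = (r:ℕ)
        · have hπi : (ndpfPi ⟨(r:ℕ)-1, hrm1⟩).1 i = ⟨(r:ℕ)-1, hrpred_lt⟩ := by
            apply Fin.ext
            rw [hπ, if_pos hc]
          rw [hπi, hgval]
          have hne : (⟨(r:ℕ)-1, hrpred_lt⟩ : Fin (n+1)) ≠ r := by
            intro hcon
            have hcon' : (r:ℕ)-1 = (r:ℕ) := congrArg Fin.val hcon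
            omega
          rw [if_neg hne, hrpred]
          have hir : i = r := Fin.ext hc
          rw [hir, hrval']
        · have hπi : (ndpfPi ⟨(r:ℕ)-1, hrm1⟩).1 i = i := by
            apply Fin.ext
            rw [hπ, if_neg hc]
          rw [hπi, hgval]
          have hne : i ≠ r := fun hcon => hc (congrArg Fin.val hcon)
          rw [if_neg hne]
      have hmeas : msr g < msr f := by
        unfold msr
        apply Finset.sum_lt_sum
        · intro i _
          rw [hgval]
          by_cases hi : i = r
          · rw [if_pos hi, hi]
            omega
          · rw [if_neg hi]
        · refine ⟨r, Finset.mem_univ r, ?_⟩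
          rw [hgval, if_pos rfl]
          omega
      obtain ⟨u', hu'⟩ := ih g (by omega)
      refine ⟨u' * FreeMonoid.of ⟨(r:ℕ)-1, hrm1⟩, ?_⟩
      rw [map_mul, hu',
        show phi0 n (FreeMonoid.of ⟨(r:ℕ)-1, hrm1⟩) = ndpfPi ⟨(r:ℕ)-1, hrm1⟩ from
          FreeMonoid.lift_eval_of _ _]
      exact hdecomp

theorem phi_surj : Function.Surjective (phiHK n) := by
  intro f
  obtain ⟨u, hu⟩ := ndpf_gen (msr f) f le_rfl
  exact ⟨(HKCon (arrQn n)).mk' u, by rw [phiHK_coe]; exact hu⟩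

end Surj
/-- For every `n ≥ 1`, the assignment `x_j ↦ π_j` extends to a monoid
isomorphism from the Hecke–Kiselman monoid of the linearly oriented type-`A` quiver
`Q_n` onto the monoid `NDPF_{n+1}` of non-decreasing parking functions. -/
theorem hk_iso_ndpf (n : ℕ) (hn : 1 ≤ n) :
    ∃ φ : HK (arrQn n) ≃* NDPF (n + 1),
      ∀ j : Fin n, φ (HK.x (arrQn n) j) = ndpfPi j := by
  refine ⟨MulEquiv.ofBijective (phiHK n) ⟨phi_inj, phi_surj⟩, ?_⟩
  intro j
  show phiHK n (HK.x (arrQn n) j) = ndpfPi j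
  rw [show HK.x (arrQn n) j = (HKCon (arrQn n)).mk' (FreeMonoid.of j) from rfl, phiHK_coe]
  exact FreeMonoid.lift_eval_of _ _
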